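/- arXiv:1403.4151 — 4 statements merged into one kernel-verified Lean document; each statement's English description precedes it below -/
import Mathlib

section
/- Let L : [0,1] → FS₊(H) be a continuously differentiable path of selfadjoint Fredholm operators with regular crossing at λ₀ ∈ (0,1), meaning the quadratic form Γ(L,λ₀)[u] = ⟨L'(λ₀)u, u⟩ restricted to ker L(λ₀) is non-degenerate. Then there exist ε, C > 0 such that ‖L(λ)u‖ ≥ C·|λ−λ₀|·‖u‖ for all u ∈ H and all λ with |λ−λ₀| < ε. In particular L(λ) is injective with closed range for 0 < |λ−λ₀| < ε. -/
open Module Set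
open scoped RealInnerProductSpace
open Submodule

private lemma rcl_range_eq {H : Type*} [NormedAddCommGroup H] [InnerProductSpace ℝ H]
    [CompleteSpace H] (T : H →L[ℝ] H) (hsym : (T : H →ₗ[ℝ] H).IsSymmetric)
    (hclosed : IsClosed (LinearMap.range (T : H →ₗ[ℝ] H) : Set H)) :
    LinearMap.range (T : H →ₗ[ℝ] H) = (LinearMap.ker (T : H →ₗ[ℝ] H) : Submodule ℝ H)ᗮ := by
  haveI : CompleteSpace (LinearMap.range (T : H →ₗ[ℝ] H)) := hclosed.completeSpace_coe
  have horth : (LinearMap.range (T : H →ₗ[ℝ] H))ᗮ = LinearMap.ker (T : H →ₗ[ℝ] H) := by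
    ext x
    simp only [Submodule.mem_orthogonal, LinearMap.mem_range, LinearMap.mem_ker,
      forall_exists_index]
    constructor
    · intro h
      have h2 : ∀ u : H, ⟪u, T x⟫ = 0 := fun u => by
        have hs := hsym u x
        simp only [ContinuousLinearMap.coe_coe] at hs
        rw [← hs]; exact h _ u rfl
      have := h2 (T x)
      rwa [inner_self_eq_zero] at this
    · intro hx u v hv
      subst hv
      have hs := hsym v x
      simp only [ContinuousLinearMap.coe_coe] at hs
      simp only [ContinuousLinearMap.coe_coe] at hx ⊢
      rw [hs, hx, inner_zero_right]
  calc LinearMap.range (T : H →ₗ[ℝ] H) = ((LinearMap.range (T : H →ₗ[ℝ] H))ᗮ)ᗮ :=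
        (Submodule.orthogonal_orthogonal _).symm
    _ = (LinearMap.ker (T : H →ₗ[ℝ] H) : Submodule ℝ H)ᗮ := by rw [horth]

/-- A continuous linear map on a complete space, restricted to the orthogonal complement of its
kernel, is bounded below, provided its range is closed and equals that complement. -/
private lemma rcl_bounded_below {H : Type*} [NormedAddCommGroup H] [InnerProductSpace ℝ H]
    [CompleteSpace H] (T : H →L[ℝ] H) [HasOrthogonalProjection (LinearMap.ker (T : H →ₗ[ℝ] H))]
    (hclosed : IsClosed (LinearMap.range (T : H →ₗ[ℝ] H) : Set H))
    (hrange : LinearMap.range (T : H →ₗ[ℝ] H) = (LinearMap.ker (T : H →ₗ[ℝ] H) : Submodule ℝ H)ᗮ) :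
    ∃ c > (0:ℝ), ∀ w ∈ (LinearMap.ker (T : H →ₗ[ℝ] H) : Submodule ℝ H)ᗮ, c * ‖w‖ ≤ ‖T w‖ := by
  set K : Submodule ℝ H := LinearMap.ker (T : H →ₗ[ℝ] H) with hKdef
  haveI : CompleteSpace (Kᗮ : Submodule ℝ H) := K.isClosed_orthogonal.completeSpace_coe
  have hmem : ∀ x : (Kᗮ : Submodule ℝ H), T x ∈ Kᗮ := by
    intro x
    have h := LinearMap.mem_range_self (T : H →ₗ[ℝ] H) (x : H)
    rwa [hrange] at h
  set That : (Kᗮ : Submodule ℝ H) →L[ℝ] (Kᗮ : Submodule ℝ H) :=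
    (T.comp Kᗮ.subtypeL).codRestrict Kᗮ hmem with hThat
  have hinj : LinearMap.ker (That : (Kᗮ : Submodule ℝ H) →ₗ[ℝ] (Kᗮ : Submodule ℝ H)) = ⊥ := by
    rw [LinearMap.ker_eq_bot]
    intro x y hxy
    have hx : T (x - y : H) = 0 := by
      have : (That x : H) = That y := congrArg _ hxy
      simp only [hThat, ContinuousLinearMap.coe_codRestrict_apply,
        ContinuousLinearMap.comp_apply, Submodule.coe_subtypeL,
        Submodule.subtypeL_apply, Submodule.coe_subtype] at this
      rw [map_sub]; exact sub_eq_zero.mpr this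
    have hxK : (x - y : H) ∈ K := hx
    have hxKp : (x - y : H) ∈ Kᗮ := sub_mem x.2 y.2
    have : (x - y : H) = 0 := by
      have h0 : ⟪(x - y : H), (x - y : H)⟫ = 0 :=
        Submodule.inner_right_of_mem_orthogonal hxK hxKp
      rwa [inner_self_eq_zero] at h0
    exact Subtype.ext (sub_eq_zero.mp this)
  have hsurj : LinearMap.range (That : (Kᗮ : Submodule ℝ H) →ₗ[ℝ] (Kᗮ : Submodule ℝ H)) = ⊤ := by
    rw [LinearMap.range_eq_top]
    intro y
    have hy : (y : H) ∈ LinearMap.range (T : H →ₗ[ℝ] H) := by rw [hrange]; exact y.2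
    obtain ⟨u, hu⟩ := hy
    refine ⟨⟨u - (orthogonalProjection K u : H), Submodule.sub_starProjection_mem_orthogonal u⟩, ?_⟩
    apply Subtype.ext
    have hker : T (orthogonalProjection K u : H) = 0 := (orthogonalProjection K u).2
    show T (u - (orthogonalProjection K u : H)) = (y : H)
    rw [map_sub, hker, sub_zero]; exact hu
  set e := ContinuousLinearEquiv.ofBijective That hinj hsurj with he
  refine ⟨(‖(e.symm : (Kᗮ : Submodule ℝ H) →L[ℝ] Kᗮ)‖ + 1)⁻¹, by positivity, ?_⟩
  intro w hw
  rw [inv_mul_le_iff₀ (by positivity)]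
  have h4 : ‖e ⟨w, hw⟩‖ = ‖T w‖ := rfl
  calc ‖w‖ = ‖e.symm (e ⟨w, hw⟩)‖ := by rw [e.symm_apply_apply]; rfl
    _ ≤ ‖(e.symm : (Kᗮ : Submodule ℝ H) →L[ℝ] Kᗮ)‖ * ‖e ⟨w, hw⟩‖ :=
        (e.symm : (Kᗮ : Submodule ℝ H) →L[ℝ] Kᗮ).le_opNorm _
    _ = ‖(e.symm : (Kᗮ : Submodule ℝ H) →L[ℝ] Kᗮ)‖ * ‖T w‖ := by rw [h4]
    _ ≤ (‖(e.symm : (Kᗮ : Submodule ℝ H) →L[ℝ] Kᗮ)‖ + 1) * ‖T w‖ :=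
        mul_le_mul_of_nonneg_right (by linarith) (norm_nonneg _)

/-- An injective continuous endomorphism of a finite-dimensional space is bounded below. -/
private lemma rcl_fd_bounded_below {E : Type*} [NormedAddCommGroup E] [NormedSpace ℝ E]
    [FiniteDimensional ℝ E] (B : E →L[ℝ] E) (hinj : Function.Injective B) :
    ∃ c > (0:ℝ), ∀ x, c * ‖x‖ ≤ ‖B x‖ := by
  haveI : CompleteSpace E := FiniteDimensional.complete ℝ E
  have hinj' : LinearMap.ker (B : E →ₗ[ℝ] E) = ⊥ := LinearMap.ker_eq_bot.mpr hinj
  have hsurj : LinearMap.range (B : E →ₗ[ℝ] E) = ⊤ := by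
    rw [LinearMap.range_eq_top]
    exact (LinearMap.injective_iff_surjective (f := (B : E →ₗ[ℝ] E))).mp hinj
  set e := ContinuousLinearEquiv.ofBijective B hinj' hsurj with he
  refine ⟨(‖(e.symm : E →L[ℝ] E)‖ + 1)⁻¹, by positivity, ?_⟩
  intro x
  rw [inv_mul_le_iff₀ (by positivity)]
  have h4 : ‖e x‖ = ‖B x‖ := rfl
  calc ‖x‖ = ‖e.symm (e x)‖ := by rw [e.symm_apply_apply]
    _ ≤ ‖(e.symm : E →L[ℝ] E)‖ * ‖e x‖ := (e.symm : E →L[ℝ] E).le_opNorm _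
    _ = ‖(e.symm : E →L[ℝ] E)‖ * ‖B x‖ := by rw [h4]
    _ ≤ (‖(e.symm : E →L[ℝ] E)‖ + 1) * ‖B x‖ :=
        mul_le_mul_of_nonneg_right (by linarith) (norm_nonneg _)

private lemma rcl_lin (T c1 U X W eta C : ℝ)
    (e1 : T * (c1 * (U / 2)) ≤ T * (c1 * X))
    (e2 : T * W ≤ T * (c1 / 8 * U))
    (e3 : eta * (T * U) ≤ c1 / 8 * (T * U))
    (e4 : C * (T * U) ≤ c1 / 4 * (T * U)) :
    C * T * U ≤ T * (c1 * X) - (T * W + eta * T * U) := by linarith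


set_option maxHeartbeats 2000000 in
/-- Let `L : [0,1] → FS₊(H)` be a continuously differentiable path of selfadjoint
Fredholm operators with a regular crossing at `λ₀ ∈ (0,1)`, i.e. the crossing form
`u ↦ ⟪L'(λ₀)u, u⟫` restricted to `ker L(λ₀)` is non-degenerate. Then there exist `ε, C > 0` such
that `‖L(λ)u‖ ≥ C|λ−λ₀|‖u‖` for all `u ∈ H` and `|λ−λ₀| < ε`; in particular `L(λ)` is injective
with closed range for `0 < |λ−λ₀| < ε`. -/
theorem regular_crossing_lower_bound
    {H : Type*} [NormedAddCommGroup H] [InnerProductSpace ℝ H] [CompleteSpace H]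
    (L : ℝ → H →L[ℝ] H) (hC1 : ContDiffOn ℝ 1 L (Icc 0 1))
    (hsa : ∀ l ∈ Icc (0:ℝ) 1, IsSelfAdjoint (L l))
    (hker : ∀ l ∈ Icc (0:ℝ) 1, FiniteDimensional ℝ (LinearMap.ker (L l : H →ₗ[ℝ] H)))
    (hran : ∀ l ∈ Icc (0:ℝ) 1, IsClosed (LinearMap.range (L l : H →ₗ[ℝ] H) : Set H))
    (lam₀ : ℝ) (hlam₀ : lam₀ ∈ Ioo (0:ℝ) 1)
    (L' : H →L[ℝ] H) (hder : HasDerivAt L L' lam₀)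
    (hcross : LinearMap.ker (L lam₀ : H →ₗ[ℝ] H) ≠ ⊥)
    (hreg : ∀ u ∈ LinearMap.ker (L lam₀ : H →ₗ[ℝ] H),
      (∀ v ∈ LinearMap.ker (L lam₀ : H →ₗ[ℝ] H), ⟪L' u, v⟫ = 0) → u = 0) :
    ∃ ε > (0:ℝ), ∃ C > (0:ℝ),
      (∀ l ∈ Icc (0:ℝ) 1, |l - lam₀| < ε → ∀ u : H, C * |l - lam₀| * ‖u‖ ≤ ‖L l u‖) ∧
      ∀ l ∈ Icc (0:ℝ) 1, 0 < |l - lam₀| → |l - lam₀| < ε →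
        Function.Injective (L l) ∧ IsClosed (LinearMap.range (L l : H →ₗ[ℝ] H) : Set H) := by
  classical
  have hl0 : lam₀ ∈ Icc (0:ℝ) 1 := Ioo_subset_Icc_self hlam₀
  set T : H →L[ℝ] H := L lam₀ with hTdef
  set K : Submodule ℝ H := LinearMap.ker (T : H →ₗ[ℝ] H) with hKdef
  haveI hKfd : FiniteDimensional ℝ K := hker lam₀ hl0
  haveI : CompleteSpace K := FiniteDimensional.complete ℝ K
  have hsym : (T : H →ₗ[ℝ] H).IsSymmetric := (hsa lam₀ hl0).isSymmetric
  have hcl : IsClosed (LinearMap.range (T : H →ₗ[ℝ] H) : Set H) := hran lam₀ hl0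
  have hrange : LinearMap.range (T : H →ₗ[ℝ] H) = Kᗮ := rcl_range_eq T hsym hcl
  obtain ⟨c₀, hc₀, hc₀w⟩ := rcl_bounded_below T hcl hrange
  -- the finite-dimensional crossing operator
  set B : K →L[ℝ] K := (orthogonalProjection K).comp (L'.comp K.subtypeL) with hBdef
  have hBker : ∀ z : K, B z = 0 → z = 0 := by
    intro z hz
    have hz' : orthogonalProjection K (L' (z : H)) = 0 := hz
    have hmem : L' (z : H) ∈ Kᗮ := Submodule.orthogonalProjectionOnto_eq_zero_iff.mp hz'
    have hz0 : (z : H) = 0 :=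
      hreg z z.2 fun v hv => Submodule.inner_left_of_mem_orthogonal hv hmem
    exact Subtype.ext hz0
  have hBinj : Function.Injective B := by
    intro a b hab
    have h0 : B (a - b) = 0 := by rw [map_sub, hab, sub_self]
    have := hBker _ h0
    exact sub_eq_zero.mp this
  obtain ⟨c₁, hc₁, hc₁x⟩ := rcl_fd_bounded_below B hBinj
  -- constants
  set M : ℝ := ‖L'‖ + 1 with hMdef
  have hM1 : (1:ℝ) ≤ M := by have := norm_nonneg L'; simp only [hMdef]; linarith
  have hM0 : (0:ℝ) < M := by linarith
  have hL'M : ‖L'‖ ≤ M := by simp only [hMdef]; linarith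
  set η : ℝ := min 1 (c₁/8) with hηdef
  have hη : 0 < η := lt_min one_pos (by positivity)
  have hη1 : η ≤ 1 := min_le_left _ _
  have hηc : η ≤ c₁/8 := min_le_right _ _
  have hlo := (hasDerivAt_iff_isLittleO.mp hder).bound hη
  rw [Metric.eventually_nhds_iff] at hlo
  obtain ⟨ε₀, hε₀, hb⟩ := hlo
  set δ : ℝ := min (1/2) (c₁/(8*M)) with hδdef
  have hδ : 0 < δ := lt_min (by norm_num) (by positivity)
  have hδhalf : δ ≤ 1/2 := min_le_left _ _
  have hδc : δ ≤ c₁/(8*M) := min_le_right _ _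
  have hMδ : M * δ ≤ c₁/8 := by
    calc M * δ ≤ M * (c₁/(8*M)) := by nlinarith
      _ = c₁/8 := by field_simp
  set ε : ℝ := min ε₀ (c₀*δ/(4*M)) with hεdef
  have hε : 0 < ε := lt_min hε₀ (by positivity)
  have hεε₀ : ε ≤ ε₀ := min_le_left _ _
  have hεc : ε ≤ c₀*δ/(4*M) := min_le_right _ _
  set C : ℝ := min (c₁/4) M with hCdef
  have hC : 0 < C := lt_min (by positivity) hM0
  have hCc₁ : C ≤ c₁/4 := min_le_left _ _
  have hCM : C ≤ M := min_le_right _ _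
  have main : ∀ l ∈ Icc (0:ℝ) 1, |l - lam₀| < ε → ∀ u : H, C * |l - lam₀| * ‖u‖ ≤ ‖L l u‖ := by
    intro l _ hlt u
    set t : ℝ := l - lam₀ with htdef
    set E : H →L[ℝ] H := L l - T - t • L' with hEdef
    have hEnorm : ‖E‖ ≤ η * |t| := by
      have hd : dist l lam₀ < ε₀ := by rw [Real.dist_eq]; exact lt_of_lt_of_le hlt hεε₀
      have := hb hd
      simpa [Real.norm_eq_abs] using this
    -- decomposition of u
    set x : H := (orthogonalProjection K u : H) with hxdef
    set w : H := u - x with hwdef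
    have hxK : x ∈ K := (orthogonalProjection K u).2
    have hwK : w ∈ Kᗮ := Submodule.sub_starProjection_mem_orthogonal u
    have hxw : ⟪x, w⟫ = 0 := Submodule.inner_right_of_mem_orthogonal hxK hwK
    have huxw : u = x + w := by rw [hwdef]; abel
    have hpyth : ‖u‖^2 = ‖x‖^2 + ‖w‖^2 := by
      rw [huxw, norm_add_sq_real, hxw]; ring
    have hxu : ‖x‖ ≤ ‖u‖ := by nlinarith [norm_nonneg x, norm_nonneg w, norm_nonneg u]
    have hwu : ‖w‖ ≤ ‖u‖ := by nlinarith [norm_nonneg x, norm_nonneg w, norm_nonneg u]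
    -- projection contraction
    have hproj : ∀ v : H, ‖(orthogonalProjection K v : H)‖ ≤ ‖v‖ ∧
        ‖v - (orthogonalProjection K v : H)‖ ≤ ‖v‖ := by
      intro v
      have h1 : ⟪(orthogonalProjection K v : H), v - (orthogonalProjection K v : H)⟫ = 0 :=
        Submodule.inner_right_of_mem_orthogonal (orthogonalProjection K v).2
          (Submodule.sub_starProjection_mem_orthogonal v)
      have h2 : v = (orthogonalProjection K v : H) + (v - (orthogonalProjection K v : H)) := by
        abel
      have h3 : ‖v‖^2 = ‖(orthogonalProjection K v : H)‖^2 +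
          ‖v - (orthogonalProjection K v : H)‖^2 := by
        nth_rewrite 1 [h2]
        rw [norm_add_sq_real, h1]; ring
      constructor <;>
        nlinarith [norm_nonneg (orthogonalProjection K v : H), norm_nonneg v,
          norm_nonneg (v - (orthogonalProjection K v : H))]
    -- basic operator decomposition : L l u = T w + (t • L' u + E u)
    have hTx : T x = 0 := hxK
    have hTu : T u = T w := by rw [huxw, map_add, hTx, zero_add]
    have hEu : E u = L l u - T u - t • L' u := by
      simp [hEdef, ContinuousLinearMap.sub_apply, ContinuousLinearMap.smul_apply]
    have hdecomp : L l u = T w + (t • L' u + E u) := by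
      rw [hEu, hTu]; abel
    have hEub : ‖E u‖ ≤ η * |t| * ‖u‖ := by
      calc ‖E u‖ ≤ ‖E‖ * ‖u‖ := E.le_opNorm u
        _ ≤ (η * |t|) * ‖u‖ := mul_le_mul_of_nonneg_right hEnorm (norm_nonneg u)
    have hL'u : ‖L' u‖ ≤ M * ‖u‖ := by
      calc ‖L' u‖ ≤ ‖L'‖ * ‖u‖ := L'.le_opNorm u
        _ ≤ M * ‖u‖ := mul_le_mul_of_nonneg_right hL'M (norm_nonneg u)
    have hTwK : T w ∈ Kᗮ := by rw [← hrange]; exact LinearMap.mem_range_self _ _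
    have hPTw : orthogonalProjection K (T w) = 0 :=
      Submodule.orthogonalProjectionOnto_eq_zero_iff.mpr hTwK
    by_cases hcase : δ * ‖u‖ ≤ ‖w‖
    · -- use the complement part
      set s : H := t • L' u + E u with hsdef
      have hsb : ‖s‖ ≤ 2 * M * |t| * ‖u‖ := by
        calc ‖s‖ ≤ ‖t • L' u‖ + ‖E u‖ := norm_add_le _ _
          _ = |t| * ‖L' u‖ + ‖E u‖ := by rw [norm_smul, Real.norm_eq_abs]
          _ ≤ |t| * (M * ‖u‖) + η * |t| * ‖u‖ :=
              add_le_add (mul_le_mul_of_nonneg_left hL'u (abs_nonneg t)) hEub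
          _ ≤ 2 * M * |t| * ‖u‖ := by
              nlinarith [mul_nonneg (abs_nonneg t) (norm_nonneg u),
                sub_nonneg.mpr (le_trans hη1 hM1)]
      have hq : L l u - (orthogonalProjection K (L l u) : H) =
          T w + (s - (orthogonalProjection K s : H)) := by
        have hP : (orthogonalProjection K (L l u) : H) = (orthogonalProjection K s : H) := by
          rw [hdecomp, map_add, hPTw]
          simp
        rw [hP, hdecomp]; abel
      have h1 : ‖L l u‖ ≥ ‖L l u - (orthogonalProjection K (L l u) : H)‖ := (hproj _).2
      have h2 : ‖T w + (s - (orthogonalProjection K s : H))‖ ≥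
          ‖T w‖ - ‖s - (orthogonalProjection K s : H)‖ := by
        have := norm_add_le (T w + (s - (orthogonalProjection K s : H)))
          (-(s - (orthogonalProjection K s : H)))
        simp only [add_neg_cancel_right, norm_neg] at this
        linarith
      have h3 : ‖T w‖ ≥ c₀ * ‖w‖ := hc₀w w hwK
      have h4 : ‖s - (orthogonalProjection K s : H)‖ ≤ ‖s‖ := (hproj s).2
      have h5 : c₀ * (δ * ‖u‖) ≤ c₀ * ‖w‖ := mul_le_mul_of_nonneg_left hcase hc₀.le
      have h6 : 2 * M * |t| ≤ c₀ * δ / 2 := by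
        have : |t| ≤ c₀*δ/(4*M) := le_of_lt (lt_of_lt_of_le hlt hεc)
        calc 2 * M * |t| ≤ 2 * M * (c₀*δ/(4*M)) :=
              mul_le_mul_of_nonneg_left this (by positivity)
          _ = c₀ * δ / 2 := by field_simp; ring
      have h7 : C * |t| ≤ c₀ * δ / 4 := by
        have : |t| ≤ c₀*δ/(4*M) := le_of_lt (lt_of_lt_of_le hlt hεc)
        calc C * |t| ≤ M * (c₀*δ/(4*M)) :=
              mul_le_mul hCM this (abs_nonneg t) hM0.le
          _ = c₀ * δ / 4 := by field_simp
      calc C * |t| * ‖u‖ ≤ (c₀ * δ / 4) * ‖u‖ :=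
            mul_le_mul_of_nonneg_right h7 (norm_nonneg u)
        _ ≤ c₀ * (δ * ‖u‖) - 2 * M * |t| * ‖u‖ := by
            nlinarith [mul_le_mul_of_nonneg_right h6 (norm_nonneg u),
              mul_nonneg (mul_nonneg hc₀.le hδ.le) (norm_nonneg u)]
        _ ≤ ‖T w‖ - ‖s‖ := by linarith [h3, h5, hsb]
        _ ≤ ‖T w‖ - ‖s - (orthogonalProjection K s : H)‖ := by linarith
        _ ≤ ‖T w + (s - (orthogonalProjection K s : H))‖ := by linarith
        _ = ‖L l u - (orthogonalProjection K (L l u) : H)‖ := by rw [hq]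
        _ ≤ ‖L l u‖ := (hproj _).2
    · -- kernel-dominated case
      push_neg at hcase
      have hwδ : ‖w‖ ≤ δ * ‖u‖ := le_of_lt hcase
      have hw2 : ‖w‖ ≤ (1/2) * ‖u‖ :=
        le_trans hwδ (mul_le_mul_of_nonneg_right hδhalf (norm_nonneg u))
      have hx2 : ‖u‖ ≤ 2 * ‖x‖ := by
        nlinarith [hpyth, hw2, norm_nonneg x, norm_nonneg u, norm_nonneg w,
          sq_nonneg (2*‖x‖ - ‖u‖)]
      -- projection of L l u
      set z : K := orthogonalProjection K u with hzdef
      have hBz : (B z : H) = (orthogonalProjection K (L' x) : H) := rfl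
      have hBzn : c₁ * ‖x‖ ≤ ‖(orthogonalProjection K (L' x) : H)‖ := by
        have := hc₁x z
        have hzn : ‖z‖ = ‖x‖ := rfl
        have hBn : ‖B z‖ = ‖(orthogonalProjection K (L' x) : H)‖ := by rw [← hBz]; rfl
        rw [hzn, hBn] at this
        exact this
      have hL'w : ‖L' w‖ ≤ M * ‖w‖ := by
        calc ‖L' w‖ ≤ ‖L'‖ * ‖w‖ := L'.le_opNorm w
          _ ≤ M * ‖w‖ := mul_le_mul_of_nonneg_right hL'M (norm_nonneg w)
      have hP : (orthogonalProjection K (L l u) : H) =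
          t • (orthogonalProjection K (L' x) : H) +
            (t • (orthogonalProjection K (L' w) : H) + (orthogonalProjection K (E u) : H)) := by
        have hL'uxw : L' u = L' x + L' w := by rw [huxw, map_add]
        rw [hdecomp, hL'uxw]
        push_cast [map_add, map_smul, hPTw, smul_add]
        abel
      have hr : ‖t • (orthogonalProjection K (L' w) : H) + (orthogonalProjection K (E u) : H)‖ ≤
          |t| * (M * ‖w‖) + η * |t| * ‖u‖ := by
        calc ‖t • (orthogonalProjection K (L' w) : H) + (orthogonalProjection K (E u) : H)‖
            ≤ ‖t • (orthogonalProjection K (L' w) : H)‖ + ‖(orthogonalProjection K (E u) : H)‖ :=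
              norm_add_le _ _
          _ ≤ |t| * ‖(orthogonalProjection K (L' w) : H)‖ + ‖E u‖ := by
              rw [norm_smul, Real.norm_eq_abs]
              exact add_le_add le_rfl (hproj _).1
          _ ≤ |t| * ‖L' w‖ + η * |t| * ‖u‖ :=
              add_le_add (mul_le_mul_of_nonneg_left (hproj _).1 (abs_nonneg t)) hEub
          _ ≤ |t| * (M * ‖w‖) + η * |t| * ‖u‖ :=
              add_le_add (mul_le_mul_of_nonneg_left hL'w (abs_nonneg t)) le_rfl
      have hlow : ‖(orthogonalProjection K (L l u) : H)‖ ≥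
          |t| * (c₁ * ‖x‖) - (|t| * (M * ‖w‖) + η * |t| * ‖u‖) := by
        rw [hP]
        have htri : ‖t • (orthogonalProjection K (L' x) : H) +
            (t • (orthogonalProjection K (L' w) : H) + (orthogonalProjection K (E u) : H))‖ ≥
            ‖t • (orthogonalProjection K (L' x) : H)‖ -
            ‖t • (orthogonalProjection K (L' w) : H) + (orthogonalProjection K (E u) : H)‖ := by
          have := norm_add_le (t • (orthogonalProjection K (L' x) : H) +
            (t • (orthogonalProjection K (L' w) : H) + (orthogonalProjection K (E u) : H)))
            (-(t • (orthogonalProjection K (L' w) : H) + (orthogonalProjection K (E u) : H)))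
          simp only [add_neg_cancel_right, norm_neg] at this
          linarith
        have hsmul : ‖t • (orthogonalProjection K (L' x) : H)‖ = |t| *
            ‖(orthogonalProjection K (L' x) : H)‖ := by rw [norm_smul, Real.norm_eq_abs]
        have : |t| * (c₁ * ‖x‖) ≤ |t| * ‖(orthogonalProjection K (L' x) : H)‖ :=
          mul_le_mul_of_nonneg_left hBzn (abs_nonneg t)
        linarith
      -- combine
      have hfinal : C * |t| * ‖u‖ ≤ |t| * (c₁ * ‖x‖) - (|t| * (M * ‖w‖) + η * |t| * ‖u‖) := by
        have e1 : |t| * (c₁ * (‖u‖/2)) ≤ |t| * (c₁ * ‖x‖) :=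
          mul_le_mul_of_nonneg_left
            (mul_le_mul_of_nonneg_left (by linarith) hc₁.le) (abs_nonneg t)
        have e2' : M * ‖w‖ ≤ (c₁/8) * ‖u‖ := by
          nlinarith [mul_le_mul_of_nonneg_left hwδ hM0.le,
            mul_le_mul_of_nonneg_right hMδ (norm_nonneg u)]
        have e2 : |t| * (M * ‖w‖) ≤ |t| * ((c₁/8) * ‖u‖) :=
          mul_le_mul_of_nonneg_left e2' (abs_nonneg t)
        have e3 : η * (|t| * ‖u‖) ≤ (c₁/8) * (|t| * ‖u‖) :=
          mul_le_mul_of_nonneg_right hηc (mul_nonneg (abs_nonneg t) (norm_nonneg u))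
        have e4 : C * (|t| * ‖u‖) ≤ (c₁/4) * (|t| * ‖u‖) :=
          mul_le_mul_of_nonneg_right hCc₁ (mul_nonneg (abs_nonneg t) (norm_nonneg u))
        exact rcl_lin |t| c₁ ‖u‖ ‖x‖ (M * ‖w‖) η C e1 e2 e3 e4
      calc C * |t| * ‖u‖ ≤ |t| * (c₁ * ‖x‖) - (|t| * (M * ‖w‖) + η * |t| * ‖u‖) := hfinal
        _ ≤ ‖(orthogonalProjection K (L l u) : H)‖ := hlow
        _ ≤ ‖L l u‖ := (hproj _).1
  refine ⟨ε, hε, C, hC, main, ?_⟩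
  intro l hl hpos hlt
  refine ⟨?_, hran l hl⟩
  intro a b hab
  have h0 : L l (a - b) = 0 := by rw [map_sub, hab, sub_self]
  have := main l hl hlt (a - b)
  rw [h0, norm_zero] at this
  have hab' : ‖a - b‖ ≤ 0 := by
    by_contra hcon
    push_neg at hcon
    have hprod := mul_pos (mul_pos hC hpos) hcon
    linarith
  have : a - b = 0 := norm_le_zero_iff.mp hab'
  exact sub_eq_zero.mp this
end

section
/- Regular crossings of a continuously differentiable path of selfadjoint Fredholm operators are isolated: if λ₀ ∈ (0,1) is a regular crossing of L, then there exists ε > 0 such that ker L(λ) = {0} for all λ with 0 < |λ−λ₀| < ε. -/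
open Module Set Filter
open scoped RealInnerProductSpace Topology

set_option maxHeartbeats 1600000 in
/-- Regular crossings of a continuously differentiable path of selfadjoint
Fredholm operators are isolated: if `λ₀ ∈ (0,1)` is a regular crossing of `L`, then there exists
`ε > 0` such that `ker L(λ) = {0}` for all `λ` with `0 < |λ−λ₀| < ε`. -/
theorem regular_crossing_isolated
    {H : Type*} [NormedAddCommGroup H] [InnerProductSpace ℝ H] [CompleteSpace H]
    (L : ℝ → H →L[ℝ] H) (hC1 : ContDiffOn ℝ 1 L (Icc 0 1))
    (hsa : ∀ l ∈ Icc (0:ℝ) 1, IsSelfAdjoint (L l))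
    (hker : ∀ l ∈ Icc (0:ℝ) 1, FiniteDimensional ℝ (LinearMap.ker (L l : H →ₗ[ℝ] H)))
    (hran : ∀ l ∈ Icc (0:ℝ) 1, IsClosed (LinearMap.range (L l : H →ₗ[ℝ] H) : Set H))
    (lam₀ : ℝ) (hlam₀ : lam₀ ∈ Ioo (0:ℝ) 1)
    (L' : H →L[ℝ] H) (hder : HasDerivAt L L' lam₀)
    (hcross : LinearMap.ker (L lam₀ : H →ₗ[ℝ] H) ≠ ⊥)
    (hreg : ∀ u ∈ LinearMap.ker (L lam₀ : H →ₗ[ℝ] H),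
      (∀ v ∈ LinearMap.ker (L lam₀ : H →ₗ[ℝ] H), ⟪L' u, v⟫ = 0) → u = 0) :
    ∃ ε > (0:ℝ), ∀ l ∈ Icc (0:ℝ) 1, 0 < |l - lam₀| → |l - lam₀| < ε →
      LinearMap.ker (L l : H →ₗ[ℝ] H) = ⊥ := by
  have hmem : lam₀ ∈ Icc (0:ℝ) 1 := ⟨hlam₀.1.le, hlam₀.2.le⟩
  set N : Submodule ℝ H := LinearMap.ker (L lam₀ : H →ₗ[ℝ] H) with hNdef
  haveI : FiniteDimensional ℝ N := hker lam₀ hmem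
  haveI : CompleteSpace N := FiniteDimensional.complete ℝ N
  have hsa0 : (L lam₀ : H →ₗ[ℝ] H).IsSymmetric := (hsa lam₀ hmem).isSymmetric
  set R : Submodule ℝ H := LinearMap.range (L lam₀ : H →ₗ[ℝ] H) with hRdef
  haveI : CompleteSpace R := (hran lam₀ hmem).completeSpace_coe
  haveI : CompleteSpace (Nᗮ : Submodule ℝ H) :=
    (Submodule.isClosed_orthogonal N).completeSpace_coe
  -- the restriction of `L lam₀` to `Nᗮ`, as a map onto its (closed) range
  set T : (Nᗮ : Submodule ℝ H) →L[ℝ] R :=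
    ((L lam₀).comp Nᗮ.subtypeL).codRestrict R (fun x => LinearMap.mem_range_self _ _) with hTdef
  have hTapp : ∀ q : Nᗮ, (T q : H) = L lam₀ (q : H) := fun q => rfl
  have hTinj : T.ker = ⊥ := by
    rw [LinearMap.ker_eq_bot']
    intro q hq
    have h1 : L lam₀ (q : H) = 0 := by
      have := congrArg (Subtype.val) hq
      simpa [hTapp q] using this
    have h2 : (q : H) ∈ N := h1
    have h3 : ⟪(q : H), (q : H)⟫ = 0 := (Submodule.mem_orthogonal N (q : H)).mp q.2 _ h2
    exact Subtype.ext (inner_self_eq_zero.mp h3)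
  have hTsurj : T.range = ⊤ := by
    rw [LinearMap.range_eq_top]
    rintro ⟨r, x, hx⟩
    refine ⟨⟨x - (N.orthogonalProjectionOnto x : H), Submodule.sub_starProjection_mem_orthogonal x⟩, ?_⟩
    apply Subtype.ext
    have hPx : ((N.orthogonalProjectionOnto x : H)) ∈ N := (N.orthogonalProjectionOnto x).2
    have : L lam₀ ((N.orthogonalProjectionOnto x : H)) = 0 := hPx
    simp only [hTapp]
    show L lam₀ (x - (N.orthogonalProjectionOnto x : H)) = r
    rw [map_sub, this, sub_zero]; exact hx
  set e : (Nᗮ : Submodule ℝ H) ≃L[ℝ] R := ContinuousLinearEquiv.ofBijective T hTinj hTsurj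
    with hedef
  set C : ℝ := ‖(e.symm : R →L[ℝ] (Nᗮ : Submodule ℝ H))‖ with hCdef
  have hkey : ∀ q : (Nᗮ : Submodule ℝ H), ‖(q : H)‖ ≤ C * ‖L lam₀ (q : H)‖ := by
    intro q
    have h1 : q = e.symm (e q) := (e.symm_apply_apply q).symm
    have h2 : ‖q‖ ≤ C * ‖e q‖ := by
      conv_lhs => rw [h1]
      exact (e.symm : R →L[ℝ] (Nᗮ : Submodule ℝ H)).le_opNorm (e q)
    have h3 : ‖e q‖ = ‖L lam₀ (q : H)‖ := by
      have : ((e q : R) : H) = L lam₀ (q : H) := hTapp q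
      rw [show ‖e q‖ = ‖((e q : R) : H)‖ from rfl, this]
    rw [← h3]; exact h2
  -- contradiction setup
  by_contra hcon
  push_neg at hcon
  have hseq : ∀ n : ℕ, ∃ l, l ∈ Icc (0:ℝ) 1 ∧ 0 < |l - lam₀| ∧ |l - lam₀| < 1/(n+1) ∧
      LinearMap.ker (L l : H →ₗ[ℝ] H) ≠ ⊥ := by
    intro n
    obtain ⟨l, hl1, hl2, hl3, hl4⟩ := hcon (1/(n+1)) (by positivity)
    exact ⟨l, hl1, hl2, hl3, hl4⟩
  choose lam hlamI hlampos hlamlt hlamker using hseq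
  -- unit kernel vectors
  have hseq2 : ∀ n : ℕ, ∃ u : H, u ∈ LinearMap.ker (L (lam n) : H →ₗ[ℝ] H) ∧ u ≠ 0 := by
    intro n
    obtain ⟨u, hu1, hu2⟩ := (Submodule.ne_bot_iff _).mp (hlamker n)
    exact ⟨u, hu1, hu2⟩
  choose u hu hune using hseq2
  set w : ℕ → H := fun n => ‖u n‖⁻¹ • u n with hwdef
  have hwnorm : ∀ n, ‖w n‖ = 1 := by
    intro n
    have : ‖u n‖ ≠ 0 := norm_ne_zero_iff.mpr (hune n)
    simp [hwdef, norm_smul, abs_of_nonneg (norm_nonneg (u n)), inv_mul_cancel₀ this]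
  have hw0 : ∀ n, L (lam n) (w n) = 0 := by
    intro n
    have : L (lam n) (u n) = 0 := hu n
    simp [hwdef, map_smul, this]
  -- λₙ → λ₀
  have hlamtend : Tendsto lam atTop (𝓝 lam₀) := by
    rw [tendsto_iff_dist_tendsto_zero]
    apply squeeze_zero (fun n => dist_nonneg) (fun n => ?_)
      tendsto_one_div_add_atTop_nhds_zero_nat
    rw [Real.dist_eq]
    exact (hlamlt n).le
  -- L (lam n) → L lam₀ in operator norm
  have hLtend : Tendsto (fun n => L (lam n)) atTop (𝓝 (L lam₀)) :=
    (hder.continuousAt.tendsto).comp hlamtend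
  have hLnorm : Tendsto (fun n => ‖L (lam n) - L lam₀‖) atTop (𝓝 0) := by
    rw [← tendsto_iff_norm_sub_tendsto_zero]; exact hLtend
  -- L lam₀ (w n) → 0
  have hLw : Tendsto (fun n => ‖L lam₀ (w n)‖) atTop (𝓝 0) := by
    apply squeeze_zero (fun n => norm_nonneg _) (fun n => ?_) hLnorm
    have : L lam₀ (w n) = (L lam₀ - L (lam n)) (w n) := by simp [hw0 n]
    rw [this]
    calc ‖(L lam₀ - L (lam n)) (w n)‖ ≤ ‖L lam₀ - L (lam n)‖ * ‖w n‖ :=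
          (L lam₀ - L (lam n)).le_opNorm (w n)
      _ = ‖L (lam n) - L lam₀‖ := by rw [hwnorm n, mul_one, norm_sub_rev]
  -- orthogonal decomposition
  set p : ℕ → N := fun n => N.orthogonalProjectionOnto (w n) with hpdef
  have hqmem : ∀ n, w n - (p n : H) ∈ Nᗮ := fun n => Submodule.sub_starProjection_mem_orthogonal _
  have hq0 : Tendsto (fun n => w n - (p n : H)) atTop (𝓝 0) := by
    rw [tendsto_zero_iff_norm_tendsto_zero]
    apply squeeze_zero (fun n => norm_nonneg _) (fun n => ?_)
      (by simpa using hLw.const_mul C)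
    have h1 := hkey ⟨w n - (p n : H), hqmem n⟩
    have h2 : L lam₀ (w n - (p n : H)) = L lam₀ (w n) := by
      have : L lam₀ ((p n : H)) = 0 := (p n).2
      simp [map_sub, this]
    simpa [h2] using h1
  -- compactness in N
  have hpball : ∀ n, p n ∈ Metric.closedBall (0 : N) 1 := by
    intro n
    rw [Metric.mem_closedBall, dist_zero_right]
    calc ‖p n‖ ≤ ‖N.orthogonalProjectionOnto‖ * ‖w n‖ :=
          (N.orthogonalProjectionOnto).le_opNorm (w n)
      _ ≤ 1 * 1 := by
          rw [hwnorm n]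
          exact mul_le_mul_of_nonneg_right (Submodule.orthogonalProjectionOnto_norm_le N) zero_le_one
      _ = 1 := one_mul 1
  obtain ⟨plim, -, φ, hφ, hφtend⟩ :=
    (isCompact_closedBall (0 : N) 1).tendsto_subseq hpball
  -- w ∘ φ → plim
  have hwφ : Tendsto (fun n => w (φ n)) atTop (𝓝 (plim : H)) := by
    have h1 : Tendsto (fun n => ((p (φ n) : H))) atTop (𝓝 (plim : H)) :=
      (continuous_subtype_val.tendsto plim).comp hφtend
    have h2 : Tendsto (fun n => w (φ n) - (p (φ n) : H)) atTop (𝓝 0) :=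
      hq0.comp hφ.tendsto_atTop
    have := h1.add h2
    simpa using this
  have hplimnorm : ‖(plim : H)‖ = 1 := by
    have h1 : Tendsto (fun n => ‖w (φ n)‖) atTop (𝓝 ‖(plim : H)‖) := hwφ.norm
    have h2 : Tendsto (fun n => ‖w (φ n)‖) atTop (𝓝 1) := by
      simpa [hwnorm] using tendsto_const_nhds (x := (1:ℝ)) (f := atTop (α := ℕ))
    exact tendsto_nhds_unique h1 h2
  -- the crossing form kills plim
  have hform : ∀ v ∈ N, ⟪L' (plim : H), v⟫ = 0 := by
    intro v hv
    have hlim0 : Tendsto (fun n => ⟪L' (w n), v⟫) atTop (𝓝 0) := by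
      have hE : (fun l => L l - L lam₀ - (l - lam₀) • L') =o[𝓝 lam₀] fun l => l - lam₀ :=
        hasDerivAt_iff_isLittleO.mp hder
      have hEn : (fun n => L (lam n) - L lam₀ - (lam n - lam₀) • L') =o[atTop]
          fun n => lam n - lam₀ := hE.comp_tendsto hlamtend
      rw [NormedAddCommGroup.tendsto_nhds_zero]
      intro ε hε
      have hc : (0:ℝ) < ε / (‖v‖ + 1) := by positivity
      filter_upwards [hEn.def hc] with n hn
      set En : H →L[ℝ] H := L (lam n) - L lam₀ - (lam n - lam₀) • L' with hEndef
      have h1 : ⟪En (w n), v⟫ = -((lam n - lam₀) * ⟪L' (w n), v⟫) := by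
        have ha : ⟪L (lam n) (w n), v⟫ = (0:ℝ) := by rw [hw0 n]; simp
        have hb : ⟪L lam₀ (w n), v⟫ = (0:ℝ) := by
          have hs := hsa0 (w n) v
          simp only [ContinuousLinearMap.coe_coe] at hs
          rw [hs]
          have hv0 : L lam₀ v = 0 := hv
          rw [hv0]; simp
        simp only [hEndef, ContinuousLinearMap.sub_apply, ContinuousLinearMap.smul_apply,
          inner_sub_left, real_inner_smul_left, ha, hb]
        ring
      have h2 : |lam n - lam₀| * |⟪L' (w n), v⟫| ≤ ‖En‖ * ‖v‖ := by
        calc |lam n - lam₀| * |⟪L' (w n), v⟫| = |⟪En (w n), v⟫| := by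
              rw [h1, abs_neg, abs_mul]
          _ ≤ ‖En (w n)‖ * ‖v‖ := abs_real_inner_le_norm _ _
          _ ≤ (‖En‖ * ‖w n‖) * ‖v‖ :=
              mul_le_mul_of_nonneg_right (En.le_opNorm (w n)) (norm_nonneg v)
          _ = ‖En‖ * ‖v‖ := by rw [hwnorm n, mul_one]
      have h3 : ‖En‖ ≤ ε / (‖v‖ + 1) * |lam n - lam₀| := by
        simpa [hEndef, Real.norm_eq_abs] using hn
      have h4 : |lam n - lam₀| * |⟪L' (w n), v⟫| ≤
          |lam n - lam₀| * (ε / (‖v‖ + 1) * ‖v‖) := by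
        calc |lam n - lam₀| * |⟪L' (w n), v⟫| ≤ (ε / (‖v‖ + 1) * |lam n - lam₀|) * ‖v‖ :=
              h2.trans (mul_le_mul_of_nonneg_right h3 (norm_nonneg v))
          _ = |lam n - lam₀| * (ε / (‖v‖ + 1) * ‖v‖) := by ring
      have h5 : |⟪L' (w n), v⟫| ≤ ε / (‖v‖ + 1) * ‖v‖ :=
        le_of_mul_le_mul_left h4 (hlampos n)
      have h6 : ε / (‖v‖ + 1) * ‖v‖ < ε := by
        rw [div_mul_eq_mul_div, div_lt_iff₀ (by positivity)]
        nlinarith [norm_nonneg v]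
      calc ‖⟪L' (w n), v⟫‖ = |⟪L' (w n), v⟫| := Real.norm_eq_abs _
        _ < ε := lt_of_le_of_lt h5 h6
    have hlimp : Tendsto (fun n => ⟪L' (w (φ n)), v⟫) atTop (𝓝 ⟪L' (plim : H), v⟫) := by
      have hc : Continuous fun x : H => ⟪L' x, v⟫ :=
        Continuous.inner (L'.continuous) continuous_const
      exact (hc.tendsto _).comp hwφ
    exact tendsto_nhds_unique hlimp (hlim0.comp hφ.tendsto_atTop)
  have := hreg (plim : H) plim.2 hform
  rw [this] at hplimnorm
  simp at hplimnorm
end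

section
/- For symmetric operators on a finite-dimensional real inner product space: if A is invertible and T(t) = t·B + (1−t)·s·A is invertible for all t ∈ [0,1], where s ≠ 0 is a real scalar and B is symmetric, then μ₋(B) = μ₋(s·A); in particular μ₋(s·A) = μ₋(A) if s > 0 and μ₋(s·A) = μ₋(−A) if s < 0. -/
open Module Set
open scoped RealInnerProductSpace

/-- The Morse index: the number of negative eigenvalues, counted with multiplicity. -/
noncomputable def morseIndex {H : Type*} [NormedAddCommGroup H] [InnerProductSpace ℝ H]
    (T : H →L[ℝ] H) : ℕ :=
  Module.finrank ℝ ↥(⨆ μ : {μ : ℝ // μ < 0}, Module.End.eigenspace (↑T : H →ₗ[ℝ] H) ↑μ)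

section Aux
set_option linter.unusedSectionVars false

variable {H : Type*} [NormedAddCommGroup H] [InnerProductSpace ℝ H] [FiniteDimensional ℝ H]

lemma eigenspace_le_span (T : H →L[ℝ] H) (hT : (T : H →ₗ[ℝ] H).IsSymmetric) (μ : ℝ) :
    Module.End.eigenspace (T : H →ₗ[ℝ] H) μ ≤
      Submodule.span ℝ (hT.eigenvectorBasis rfl '' {i | hT.eigenvalues rfl i = μ}) := by
  intro x hx
  set e := hT.eigenvectorBasis rfl with he
  rw [← e.coe_toBasis, Basis.mem_span_image]
  intro i hi
  simp only [Finset.mem_coe, Finsupp.mem_support_iff] at hi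
  rw [e.coe_toBasis_repr_apply] at hi
  have h1 : e.repr ((T : H →ₗ[ℝ] H) x) i = hT.eigenvalues rfl i * e.repr x i := by
    have := hT.eigenvectorBasis_apply_self_apply rfl x i
    simpa using this
  have hx' : (T : H →ₗ[ℝ] H) x = μ • x := Module.End.mem_eigenspace_iff.mp hx
  rw [hx', map_smul] at h1
  have : μ * e.repr x i = hT.eigenvalues rfl i * e.repr x i := by simpa using h1
  have := mul_right_cancel₀ hi this
  simpa [Set.mem_setOf_eq] using this.symm

lemma iSup_eigenspace_eq_span (T : H →L[ℝ] H) (hT : (T : H →ₗ[ℝ] H).IsSymmetric) (p : ℝ → Prop) :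
    (⨆ μ : {μ : ℝ // p μ}, Module.End.eigenspace (T : H →ₗ[ℝ] H) (μ : ℝ)) =
      Submodule.span ℝ (hT.eigenvectorBasis rfl '' {i | p (hT.eigenvalues rfl i)}) := by
  apply le_antisymm
  · refine iSup_le fun μ => (eigenspace_le_span T hT μ).trans (Submodule.span_mono ?_)
    refine Set.image_mono fun i hi => ?_
    simp only [Set.mem_setOf_eq] at hi ⊢
    rw [hi]; exact μ.2
  · rw [Submodule.span_le]
    rintro _ ⟨i, hi, rfl⟩
    exact Submodule.mem_iSup_of_mem ⟨hT.eigenvalues rfl i, hi⟩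
      (hT.hasEigenvector_eigenvectorBasis rfl i).1

lemma finrank_span_eigen (T : H →L[ℝ] H) (hT : (T : H →ₗ[ℝ] H).IsSymmetric) (p : ℝ → Prop)
    [DecidablePred p] :
    finrank ℝ (Submodule.span ℝ (hT.eigenvectorBasis rfl '' {i | p (hT.eigenvalues rfl i)})) =
      Fintype.card {i // p (hT.eigenvalues rfl i)} := by
  set e := hT.eigenvectorBasis rfl with he
  set s : Set (Fin (finrank ℝ H)) := {i | p (hT.eigenvalues rfl i)} with hs
  have h1 : e '' s = Set.range (fun i : s => e i) := by
    rw [Set.image_eq_range]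
  have li : LinearIndependent ℝ (fun i : s => e i) := by
    have := e.toBasis.linearIndependent
    rw [e.coe_toBasis] at this
    exact this.comp Subtype.val Subtype.val_injective
  rw [h1, finrank_span_eq_card li]
  rfl

lemma inner_eq_sum_eigen (T : H →L[ℝ] H) (hT : (T : H →ₗ[ℝ] H).IsSymmetric) (x : H) :
    ⟪T x, x⟫ = ∑ i, hT.eigenvalues rfl i * (hT.eigenvectorBasis rfl).repr x i ^ 2 := by
  set e := hT.eigenvectorBasis rfl with he
  have h0 : ⟪T x, x⟫ = ∑ i, ⟪T x, e i⟫ * ⟪e i, x⟫ := (e.sum_inner_mul_inner (T x) x).symm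
  rw [h0]
  refine Finset.sum_congr rfl fun i _ => ?_
  have h1 : e.repr (T x) i = hT.eigenvalues rfl i * e.repr x i := by
    simpa using hT.eigenvectorBasis_apply_self_apply rfl x i
  have h2 : ⟪T x, e i⟫ = e.repr (T x) i := by
    rw [e.repr_apply_apply, real_inner_comm]
  have h3 : ⟪e i, x⟫ = e.repr x i := (e.repr_apply_apply x i).symm
  rw [h2, h3, h1]; ring

lemma neg_on_span (T : H →L[ℝ] H) (hT : (T : H →ₗ[ℝ] H).IsSymmetric) {x : H}
    (hx : x ∈ Submodule.span ℝ (hT.eigenvectorBasis rfl '' {i | hT.eigenvalues rfl i < 0}))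
    (hx0 : x ≠ 0) : ⟪T x, x⟫ < 0 := by
  set e := hT.eigenvectorBasis rfl with he
  rw [← e.coe_toBasis, Basis.mem_span_image] at hx
  rw [inner_eq_sum_eigen T hT x]
  have hsupp : ∀ i, e.repr x i ≠ 0 → hT.eigenvalues rfl i < 0 := by
    intro i hi
    apply hx
    simp only [Finset.mem_coe, Finsupp.mem_support_iff, e.coe_toBasis_repr_apply]
    exact hi
  have hex : ∃ i, e.repr x i ≠ 0 := by
    by_contra hcon
    push_neg at hcon
    apply hx0
    have := e.sum_repr x
    simp only [hcon, zero_smul, Finset.sum_const_zero] at this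
    exact this.symm
  obtain ⟨j, hj⟩ := hex
  have : ∑ i, hT.eigenvalues rfl i * e.repr x i ^ 2 < ∑ _i : Fin (finrank ℝ H), (0:ℝ) := by
    apply Finset.sum_lt_sum
    · intro i _
      rcases eq_or_ne (e.repr x i) 0 with h | h
      · simp [h]
      · exact le_of_lt (mul_neg_of_neg_of_pos (hsupp i h) (by positivity))
    · exact ⟨j, Finset.mem_univ j, mul_neg_of_neg_of_pos (hsupp j hj) (by positivity)⟩
  simpa using this

lemma nonneg_on_span (T : H →L[ℝ] H) (hT : (T : H →ₗ[ℝ] H).IsSymmetric) {x : H}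
    (hx : x ∈ Submodule.span ℝ (hT.eigenvectorBasis rfl '' {i | 0 ≤ hT.eigenvalues rfl i})) :
    0 ≤ ⟪T x, x⟫ := by
  set e := hT.eigenvectorBasis rfl with he
  rw [← e.coe_toBasis, Basis.mem_span_image] at hx
  rw [inner_eq_sum_eigen T hT x]
  apply Finset.sum_nonneg
  intro i _
  rcases eq_or_ne (e.repr x i) 0 with h | h
  · have h' : ((hT.eigenvectorBasis rfl).repr x) i = 0 := h
    simp [h']
  · have : 0 ≤ hT.eigenvalues rfl i := by
      apply hx
      simp only [Finset.mem_coe, Finsupp.mem_support_iff, e.coe_toBasis_repr_apply]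
      exact h
    positivity

open Classical in
lemma morseIndexAux_eq (T : H →L[ℝ] H) (hT : (T : H →ₗ[ℝ] H).IsSymmetric) :
    morseIndex T = Fintype.card {i // hT.eigenvalues rfl i < 0} := by
  rw [morseIndex, iSup_eigenspace_eq_span T hT (fun μ => μ < 0),
    finrank_span_eigen T hT (fun μ => μ < 0)]

open Classical in
lemma le_morseIndex (T : H →L[ℝ] H) (hT : (T : H →ₗ[ℝ] H).IsSymmetric) (V : Submodule ℝ H)
    (hV : ∀ x ∈ V, x ≠ 0 → ⟪T x, x⟫ < 0) : finrank ℝ V ≤ morseIndex T := by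
  set P := Submodule.span ℝ (hT.eigenvectorBasis rfl '' {i | 0 ≤ hT.eigenvalues rfl i}) with hP
  have hinf : V ⊓ P = ⊥ := by
    rw [Submodule.eq_bot_iff]
    intro x ⟨hxV, hxP⟩
    by_contra hx0
    exact absurd (nonneg_on_span T hT hxP) (not_le.mpr (hV x hxV hx0))
  have hsum : finrank ℝ V + finrank ℝ P ≤ finrank ℝ H := by
    have := Submodule.finrank_sup_add_finrank_inf_eq V P
    rw [hinf] at this
    simp only [finrank_bot, add_zero] at this
    rw [← this]
    exact Submodule.finrank_le _
  have hPcard : finrank ℝ P = Fintype.card {i // 0 ≤ hT.eigenvalues rfl i} :=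
    finrank_span_eigen T hT (fun μ => 0 ≤ μ)
  have hm : morseIndex T = Fintype.card {i // hT.eigenvalues rfl i < 0} := morseIndexAux_eq T hT
  have hcards : Fintype.card {i // hT.eigenvalues rfl i < 0}
      + Fintype.card {i // 0 ≤ hT.eigenvalues rfl i} = finrank ℝ H := by
    have h1 := Fintype.card_subtype_compl (fun i => hT.eigenvalues rfl i < 0)
    have h2 := Fintype.card_subtype_le (fun i : Fin (finrank ℝ H) => hT.eigenvalues rfl i < 0)
    have h3 : Fintype.card {i // 0 ≤ hT.eigenvalues rfl i}
        = Fintype.card {i // ¬ hT.eigenvalues rfl i < 0} :=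
      Fintype.card_congr (Equiv.subtypeEquivRight fun i => not_lt.symm)
    have h4 : Fintype.card (Fin (finrank ℝ H)) = finrank ℝ H := Fintype.card_fin _
    omega
  omega

lemma perturb (T : H →L[ℝ] H) (hT : IsSelfAdjoint T) :
    ∃ ε > (0:ℝ), ∀ T' : H →L[ℝ] H, IsSelfAdjoint T' → ‖T' - T‖ < ε →
      morseIndex T ≤ morseIndex T' := by
  have hTs : (T : H →ₗ[ℝ] H).IsSymmetric := hT.isSymmetric
  set N := Submodule.span ℝ (hTs.eigenvectorBasis rfl '' {i | hTs.eigenvalues rfl i < 0}) with hN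
  have hmN : morseIndex T = finrank ℝ N := by
    rw [morseIndex, iSup_eigenspace_eq_span T hTs (fun μ => μ < 0)]
  rcases eq_or_ne N ⊥ with hbot | hbot
  · exact ⟨1, one_pos, fun T' hT' _ => by rw [hmN, hbot]; simp⟩
  -- N ≠ ⊥ : compactness argument
  have hclosed : IsClosed (N : Set H) := Submodule.closed_of_finiteDimensional N
  set K : Set H := (N : Set H) ∩ Metric.sphere 0 1 with hK
  have hKc : IsCompact K := (isCompact_sphere (0:H) 1).inter_left hclosed
  have hKne : K.Nonempty := by
    obtain ⟨x, hxN, hx0⟩ := Submodule.exists_mem_ne_zero_of_ne_bot hbot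
    refine ⟨‖x‖⁻¹ • x, Submodule.smul_mem N _ hxN, ?_⟩
    simp [norm_smul, norm_ne_zero_iff.mpr hx0, inv_mul_cancel₀ (norm_ne_zero_iff.mpr hx0)]
  have hcont : Continuous (fun x : H => ⟪T x, x⟫) := (T.continuous.inner continuous_id)
  obtain ⟨x₀, hx₀K, hmax⟩ := hKc.exists_isMaxOn hKne hcont.continuousOn
  have hx₀N : x₀ ∈ N := hx₀K.1
  have hx₀norm : ‖x₀‖ = 1 := by simpa using hx₀K.2
  have hx₀0 : x₀ ≠ 0 := fun h => by simp [h] at hx₀norm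
  set c : ℝ := -⟪T x₀, x₀⟫ with hc
  have hcpos : 0 < c := by
    have := neg_on_span T hTs hx₀N hx₀0
    linarith
  refine ⟨c, hcpos, fun T' hT' hnorm => ?_⟩
  rw [hmN]
  apply le_morseIndex T' hT'.isSymmetric N
  intro x hxN hx0
  have hxnorm : ‖x‖ ≠ 0 := norm_ne_zero_iff.mpr hx0
  set u : H := ‖x‖⁻¹ • x with hu
  have huN : u ∈ N := Submodule.smul_mem N _ hxN
  have hunorm : ‖u‖ = 1 := by simp [hu, norm_smul, inv_mul_cancel₀ hxnorm]
  have huK : u ∈ K := ⟨huN, by simpa using hunorm⟩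
  have h1 : ⟪T u, u⟫ ≤ -c := by
    have := hmax huK
    simpa [hc] using this
  have h2 : ⟪(T' - T) u, u⟫ ≤ ‖T' - T‖ := by
    calc ⟪(T' - T) u, u⟫ ≤ ‖(T' - T) u‖ * ‖u‖ := real_inner_le_norm _ _
      _ ≤ ‖T' - T‖ * ‖u‖ * ‖u‖ :=
        mul_le_mul_of_nonneg_right ((T' - T).le_opNorm u) (norm_nonneg u)
      _ = ‖T' - T‖ := by rw [hunorm]; ring
  have h3 : ⟪T' u, u⟫ < 0 := by
    have : ⟪T' u, u⟫ = ⟪T u, u⟫ + ⟪(T' - T) u, u⟫ := by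
      rw [ContinuousLinearMap.sub_apply, inner_sub_left]; ring
    rw [this]; linarith
  have h4 : ⟪T' x, x⟫ = ‖x‖ ^ 2 * ⟪T' u, u⟫ := by
    have hx : x = ‖x‖ • u := by rw [hu, smul_smul, mul_inv_cancel₀ hxnorm, one_smul]
    calc ⟪T' x, x⟫ = ⟪T' (‖x‖ • u), ‖x‖ • u⟫ := by rw [← hx]
      _ = ‖x‖ * (‖x‖ * ⟪T' u, u⟫) := by
          rw [map_smul, real_inner_smul_left, real_inner_smul_right]
      _ = ‖x‖ ^ 2 * ⟪T' u, u⟫ := by ring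
  rw [h4]
  exact mul_neg_of_pos_of_neg (by positivity) h3

lemma eigenspace_neg (T : H →L[ℝ] H) (μ : ℝ) :
    Module.End.eigenspace (↑(-T) : H →ₗ[ℝ] H) μ = Module.End.eigenspace (↑T : H →ₗ[ℝ] H) (-μ) := by
  ext x
  simp only [Module.End.mem_eigenspace_iff, ContinuousLinearMap.coe_neg, LinearMap.neg_apply,
    ContinuousLinearMap.coe_coe, neg_smul]
  constructor
  · intro h
    have := congrArg Neg.neg h
    simpa using this
  · intro h
    rw [h]; simp

open Classical in
lemma sum_index (T : H →L[ℝ] H) (hT : IsSelfAdjoint T) (hinv : Function.Injective ⇑T) :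
    morseIndex T + morseIndex (-T) = finrank ℝ H := by
  have hTs : (T : H →ₗ[ℝ] H).IsSymmetric := hT.isSymmetric
  have hne : ∀ i, hTs.eigenvalues rfl i ≠ 0 := by
    intro i h0
    have hv := hTs.hasEigenvector_eigenvectorBasis rfl i
    have happ : (T : H →ₗ[ℝ] H) (hTs.eigenvectorBasis rfl i)
        = hTs.eigenvalues rfl i • hTs.eigenvectorBasis rfl i :=
      Module.End.mem_eigenspace_iff.mp hv.1
    rw [h0, zero_smul] at happ
    have : T (hTs.eigenvectorBasis rfl i) = T 0 := by rw [map_zero]; exact happ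
    exact hv.2 (hinv this)
  have hmneg : morseIndex (-T) = Fintype.card {i // 0 < hTs.eigenvalues rfl i} := by
    have key : (⨆ μ : {μ : ℝ // μ < 0}, Module.End.eigenspace (↑(-T) : H →ₗ[ℝ] H) ↑μ)
        = ⨆ μ : {μ : ℝ // 0 < μ}, Module.End.eigenspace (↑T : H →ₗ[ℝ] H) ↑μ := by
      apply le_antisymm
      · refine iSup_le fun μ => ?_
        rw [eigenspace_neg]
        exact le_iSup (fun ν : {ν : ℝ // 0 < ν} =>
          Module.End.eigenspace (↑T : H →ₗ[ℝ] H) ↑ν) ⟨-μ.1, neg_pos.mpr μ.2⟩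
      · refine iSup_le fun μ => ?_
        have : Module.End.eigenspace (↑T : H →ₗ[ℝ] H) ↑μ
            = Module.End.eigenspace (↑(-T) : H →ₗ[ℝ] H) (-μ.1) := by
          rw [eigenspace_neg, neg_neg]
        rw [this]
        exact le_iSup (fun ν : {ν : ℝ // ν < 0} =>
          Module.End.eigenspace (↑(-T) : H →ₗ[ℝ] H) ↑ν) ⟨-μ.1, neg_neg_iff_pos.mpr μ.2⟩
    rw [morseIndex, key, iSup_eigenspace_eq_span T hTs (fun μ => 0 < μ),
      finrank_span_eigen T hTs (fun μ => 0 < μ)]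
  rw [morseIndexAux_eq T hTs, hmneg]
  have h1 := Fintype.card_subtype_compl (fun i => hTs.eigenvalues rfl i < 0)
  have h2 := Fintype.card_subtype_le (fun i : Fin (finrank ℝ H) => hTs.eigenvalues rfl i < 0)
  have h3 : Fintype.card {i // 0 < hTs.eigenvalues rfl i}
      = Fintype.card {i // ¬ hTs.eigenvalues rfl i < 0} :=
    Fintype.card_congr (Equiv.subtypeEquivRight fun i => by
      constructor
      · intro h; exact not_lt.mpr (le_of_lt h)
      · intro h; exact lt_of_le_of_ne (not_lt.mp h) (Ne.symm (hne i)))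
  have h4 : Fintype.card (Fin (finrank ℝ H)) = finrank ℝ H := Fintype.card_fin _
  omega


set_option maxHeartbeats 400000 in
lemma morseIndexAux_homotopy (B C : H →L[ℝ] H) (hB : IsSelfAdjoint B) (hC : IsSelfAdjoint C)
    (hbij : ∀ t ∈ Icc (0:ℝ) 1, Function.Bijective ⇑(t • B + (1 - t) • C)) :
    morseIndex B = morseIndex C := by
  set f : Icc (0:ℝ) 1 → H →L[ℝ] H := fun t => (t : ℝ) • B + (1 - (t : ℝ)) • C with hf
  have hfc : Continuous f := by
    apply Continuous.add
    · exact continuous_subtype_val.smul continuous_const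
    · exact (continuous_const.sub continuous_subtype_val).smul continuous_const
  have hfsa : ∀ t, IsSelfAdjoint (f t) := by
    intro t
    rw [ContinuousLinearMap.isSelfAdjoint_iff_isSymmetric]
    intro x y
    simp only [hf, ContinuousLinearMap.coe_add, ContinuousLinearMap.coe_smul,
      LinearMap.add_apply, LinearMap.smul_apply, ContinuousLinearMap.coe_coe]
    rw [inner_add_left, inner_add_right, real_inner_smul_left, real_inner_smul_right,
      real_inner_smul_left, real_inner_smul_right]
    have hBs : (⟪B x, y⟫ : ℝ) = ⟪x, B y⟫ := hB.isSymmetric x y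
    have hCs : (⟪C x, y⟫ : ℝ) = ⟪x, C y⟫ := hC.isSymmetric x y
    rw [hBs, hCs]
  have hfbij : ∀ t, Function.Bijective ⇑(f t) := fun t => hbij t t.2
  set g : Icc (0:ℝ) 1 → ℕ := fun t => morseIndex (f t) with hg
  have hlc : IsLocallyConstant g := by
    rw [IsLocallyConstant.iff_eventually_eq]
    intro t
    obtain ⟨ε₁, hε₁, h1⟩ := perturb (f t) (hfsa t)
    obtain ⟨ε₂, hε₂, h2⟩ := perturb (-(f t)) ((hfsa t).neg)
    have hev : ∀ᶠ t' in nhds t, ‖f t' - f t‖ < min ε₁ ε₂ := by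
      have := Metric.tendsto_nhds.mp (hfc.tendsto t) (min ε₁ ε₂) (lt_min hε₁ hε₂)
      filter_upwards [this] with t' ht'
      rwa [dist_eq_norm] at ht'
    filter_upwards [hev] with t' ht'
    have hA1 : morseIndex (f t) ≤ morseIndex (f t') :=
      h1 (f t') (hfsa t') (lt_of_lt_of_le ht' (min_le_left _ _))
    have hA2 : morseIndex (-(f t)) ≤ morseIndex (-(f t')) := by
      apply h2 (-(f t')) (hfsa t').neg
      have heq : -f t' - -f t = -(f t' - f t) := by abel
      rw [heq, norm_neg]
      exact lt_of_lt_of_le ht' (min_le_right _ _)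
    have hs1 := sum_index (f t) (hfsa t) (hfbij t).1
    have hs2 := sum_index (f t') (hfsa t') (hfbij t').1
    show morseIndex (f t') = morseIndex (f t)
    omega
  have hends := hlc.apply_eq_of_preconnectedSpace
    (⟨1, by norm_num⟩ : Icc (0:ℝ) 1) (⟨0, by norm_num⟩ : Icc (0:ℝ) 1)
  have hf1 : f ⟨1, by norm_num⟩ = B := by
    simp [hf]
  have hf0 : f ⟨0, by norm_num⟩ = C := by
    simp [hf]
  simp only [hg] at hends
  rw [hf1, hf0] at hends
  exact hends

lemma eigenspace_smul (T : H →L[ℝ] H) {c : ℝ} (hc : c ≠ 0) (ν : ℝ) :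
    Module.End.eigenspace (↑(c • T) : H →ₗ[ℝ] H) (c * ν)
      = Module.End.eigenspace (↑T : H →ₗ[ℝ] H) ν := by
  ext x
  simp only [Module.End.mem_eigenspace_iff, ContinuousLinearMap.coe_smul,
    LinearMap.smul_apply, ContinuousLinearMap.coe_coe, mul_smul]
  constructor
  · intro h
    exact smul_right_injective H hc h
  · intro h
    rw [h]

lemma morseIndexAux_smul (T : H →L[ℝ] H) {c : ℝ} (hc : 0 < c) :
    morseIndex (c • T) = morseIndex T := by
  have key : (⨆ μ : {μ : ℝ // μ < 0}, Module.End.eigenspace (↑(c • T) : H →ₗ[ℝ] H) ↑μ)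
      = ⨆ μ : {μ : ℝ // μ < 0}, Module.End.eigenspace (↑T : H →ₗ[ℝ] H) ↑μ := by
    apply le_antisymm
    · refine iSup_le fun μ => ?_
      have h1 : (μ : ℝ) = c * ((μ : ℝ) / c) := by field_simp
      have h2 : Module.End.eigenspace (↑(c • T) : H →ₗ[ℝ] H) ↑μ
          = Module.End.eigenspace (↑T : H →ₗ[ℝ] H) ((μ : ℝ) / c) := by
        rw [h1, eigenspace_smul T (ne_of_gt hc)]
        rw [← h1]
      rw [h2]
      exact le_iSup (fun ν : {ν : ℝ // ν < 0} =>
        Module.End.eigenspace (↑T : H →ₗ[ℝ] H) ↑ν) ⟨(μ : ℝ) / c, div_neg_of_neg_of_pos μ.2 hc⟩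
    · refine iSup_le fun ν => ?_
      have h2 : Module.End.eigenspace (↑T : H →ₗ[ℝ] H) ↑ν
          = Module.End.eigenspace (↑(c • T) : H →ₗ[ℝ] H) (c * ν) :=
        (eigenspace_smul T (ne_of_gt hc) ν).symm
      rw [h2]
      exact le_iSup (fun μ : {μ : ℝ // μ < 0} =>
        Module.End.eigenspace (↑(c • T) : H →ₗ[ℝ] H) ↑μ) ⟨c * ν, mul_neg_of_pos_of_neg hc ν.2⟩
  unfold morseIndex
  rw [key]

theorem morse_index_of_linear_homotopy_aux
    (A B : H →L[ℝ] H) (hA : IsSelfAdjoint A) (hB : IsSelfAdjoint B)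
    (hAinv : Function.Bijective ⇑A)
    (s : ℝ) (hs : s ≠ 0)
    (hT : ∀ t ∈ Icc (0:ℝ) 1, Function.Bijective ⇑(t • B + (1 - t) • (s • A))) :
    morseIndex B = morseIndex (s • A) ∧
      (0 < s → morseIndex (s • A) = morseIndex A) ∧
      (s < 0 → morseIndex (s • A) = morseIndex (-A)) := by
  have hsA : IsSelfAdjoint (s • A) := by
    rw [ContinuousLinearMap.isSelfAdjoint_iff_isSymmetric]
    intro x y
    simp only [ContinuousLinearMap.coe_smul, LinearMap.smul_apply, ContinuousLinearMap.coe_coe]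
    rw [real_inner_smul_left, real_inner_smul_right]
    have hAs : (⟪A x, y⟫ : ℝ) = ⟪x, A y⟫ := hA.isSymmetric x y
    rw [hAs]
  refine ⟨morseIndexAux_homotopy B (s • A) hB hsA hT, fun hpos => morseIndexAux_smul A hpos,
    fun hneg => ?_⟩
  have h1 : s • A = (-s) • (-A) := by
    rw [smul_neg, neg_smul, neg_neg]
  rw [h1]
  exact morseIndexAux_smul (-A) (neg_pos.mpr hneg)

end Aux

/-- For symmetric operators on a finite-dimensional real inner product space:
if `A` is invertible and `T(t) = t·B + (1−t)·s·A` is invertible for all `t ∈ [0,1]`, where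
`s ≠ 0` and `B` is symmetric, then `μ₋(B) = μ₋(s·A)`; in particular `μ₋(s·A) = μ₋(A)` if `s > 0`
and `μ₋(s·A) = μ₋(−A)` if `s < 0`. -/
theorem morse_index_of_linear_homotopy
    {H : Type*} [NormedAddCommGroup H] [InnerProductSpace ℝ H] [FiniteDimensional ℝ H]
    (A B : H →L[ℝ] H) (hA : IsSelfAdjoint A) (hB : IsSelfAdjoint B)
    (hAinv : Function.Bijective ⇑A)
    (s : ℝ) (hs : s ≠ 0)
    (hT : ∀ t ∈ Icc (0:ℝ) 1, Function.Bijective ⇑(t • B + (1 - t) • (s • A))) :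
    morseIndex B = morseIndex (s • A) ∧
      (0 < s → morseIndex (s • A) = morseIndex A) ∧
      (s < 0 → morseIndex (s • A) = morseIndex (-A)) :=
  morse_index_of_linear_homotopy_aux A B hA hB hAinv s hs hT
end

section
/- If an invertible symmetric operator A and an invertible symmetric operator B on a finite-dimensional real inner product space are connected by a continuous path of invertible symmetric operators, then μ₋(A) = μ₋(B). -/
open Module Set
open scoped RealInnerProductSpace
open scoped Classical
set_option linter.unusedSectionVars false
set_option linter.unusedVariables false
set_option maxHeartbeats 1000000

noncomputable section MorseAuxSection

namespace MorseAux

variable {H : Type*} [NormedAddCommGroup H] [InnerProductSpace ℝ H] [FiniteDimensional ℝ H]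

/-- The positive index: dimension of the sum of positive eigenspaces. -/
def posIndex (T : H →L[ℝ] H) : ℕ :=
  Module.finrank ℝ ↥(⨆ μ : {μ : ℝ // 0 < μ}, Module.End.eigenspace (↑T : H →ₗ[ℝ] H) ↑μ)

lemma repr_eq_zero_of_mem_span {n : ℕ} (b : OrthonormalBasis (Fin n) ℝ H)
    (s : Finset (Fin n)) {x : H} (hx : x ∈ Submodule.span ℝ ↑(s.image b))
    {i : Fin n} (hi : i ∉ s) : b.repr x i = 0 := by
  induction hx using Submodule.span_induction with
  | mem y hy =>
    obtain ⟨j, hj, rfl⟩ := Finset.mem_image.1 hy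
    rw [OrthonormalBasis.repr_apply_apply]
    exact b.orthonormal.2 (fun h => hi (h ▸ hj))
  | zero => simp
  | add y z _ _ hy hz => simp [hy, hz]
  | smul c y _ hy => simp [hy]

lemma iSup_eigenspace_eq_span {T : H →ₗ[ℝ] H} (hT : T.IsSymmetric)
    {n : ℕ} (hn : Module.finrank ℝ H = n) (p : ℝ → Prop) :
    (⨆ μ : {μ : ℝ // p μ}, Module.End.eigenspace T ↑μ)
      = Submodule.span ℝ
        ↑((Finset.univ.filter fun i => p (hT.eigenvalues hn i)).image (hT.eigenvectorBasis hn)) := by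
  set b := hT.eigenvectorBasis hn
  apply le_antisymm
  · refine iSup_le fun ⟨ν, hν⟩ => fun x hx => ?_
    have hx' : T x = ν • x := Module.End.mem_eigenspace_iff.1 hx
    rw [← b.sum_repr x]
    refine Submodule.sum_mem _ fun i _ => ?_
    by_cases hpi : p (hT.eigenvalues hn i)
    · exact Submodule.smul_mem _ _ (Submodule.subset_span
        (Finset.mem_coe.2 (Finset.mem_image.2 ⟨i, Finset.mem_filter.2 ⟨Finset.mem_univ i, hpi⟩, rfl⟩)))
    · have h1 : b.repr (T x) i = hT.eigenvalues hn i * b.repr x i :=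
        hT.eigenvectorBasis_apply_self_apply hn x i
      have h2 : b.repr (T x) i = ν * b.repr x i := by
        rw [hx']; simp [b.repr.map_smul]
      have : b.repr x i = 0 := by
        by_contra h
        exact hpi (by
          have h3 := h1.symm.trans h2
          have : hT.eigenvalues hn i = ν := by
            exact mul_right_cancel₀ h h3
          rw [this]; exact hν)
      rw [this, zero_smul]; exact Submodule.zero_mem _
  · rw [Submodule.span_le]
    intro y hy
    obtain ⟨i, hi, rfl⟩ := Finset.mem_image.1 (Finset.mem_coe.1 hy)
    have hpi := (Finset.mem_filter.1 hi).2
    exact le_iSup (fun μ : {μ : ℝ // p μ} =>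
      Module.End.eigenspace T ↑μ) ⟨_, hpi⟩
      (hT.hasEigenvector_eigenvectorBasis hn i).1

lemma inner_map_self_eq_sum {T : H →ₗ[ℝ] H} (hT : T.IsSymmetric)
    {n : ℕ} (hn : Module.finrank ℝ H = n) (x : H) :
    ⟪T x, x⟫ = ∑ i, hT.eigenvalues hn i * ((hT.eigenvectorBasis hn).repr x i)^2 := by
  set b := hT.eigenvectorBasis hn
  have h : (inner ℝ (b.repr (T x)) (b.repr x) : ℝ) = inner ℝ (T x) x :=
    b.repr.inner_map_map (T x) x
  rw [← h, PiLp.inner_apply]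
  refine Finset.sum_congr rfl fun i _ => ?_
  rw [show b.repr (T x) i = hT.eigenvalues hn i * b.repr x i from
    hT.eigenvectorBasis_apply_self_apply hn x i]
  simp [RCLike.inner_apply, pow_two]
  ring

lemma norm_sq_eq_sum {n : ℕ} (b : OrthonormalBasis (Fin n) ℝ H) (x : H) :
    ‖x‖^2 = ∑ i, (b.repr x i)^2 := by
  have h : (inner ℝ (b.repr x) (b.repr x) : ℝ) = inner ℝ x x := b.repr.inner_map_map x x
  rw [← real_inner_self_eq_norm_sq, ← h, PiLp.inner_apply]
  refine Finset.sum_congr rfl fun i _ => ?_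
  simp [RCLike.inner_apply, pow_two]

/-- Strict sign lemma for elements of the span of eigenvectors whose eigenvalues satisfy `p`,
with respect to a sign condition. -/
lemma inner_sign_of_mem_span {T : H →ₗ[ℝ] H} (hT : T.IsSymmetric)
    {n : ℕ} (hn : Module.finrank ℝ H = n) (p : ℝ → Prop)
    {x : H}
    (hx : x ∈ Submodule.span ℝ
      ↑((Finset.univ.filter fun i => p (hT.eigenvalues hn i)).image (hT.eigenvectorBasis hn)))
    (hx0 : x ≠ 0) (hneg : ∀ μ, p μ → μ < 0) : ⟪T x, x⟫ < 0 := by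
  set b := hT.eigenvectorBasis hn
  rw [inner_map_self_eq_sum hT hn x]
  have hvanish : ∀ i, ¬ p (hT.eigenvalues hn i) → b.repr x i = 0 := fun i hi =>
    repr_eq_zero_of_mem_span b _ hx (by simp [hi])
  have hex : ∃ i, b.repr x i ≠ 0 := by
    by_contra h
    push_neg at h
    apply hx0
    have : b.repr x = 0 := by ext i; simpa using h i
    simpa using congrArg b.repr.symm this
  obtain ⟨j, hj⟩ := hex
  have hpj : p (hT.eigenvalues hn j) := by
    by_contra h; exact hj (hvanish j h)
  have := Finset.sum_lt_sum (s := Finset.univ)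
    (f := fun i => hT.eigenvalues hn i * (b.repr x i)^2) (g := fun _ => (0:ℝ))
    (fun i _ => by
      dsimp only
      by_cases hpi : p (hT.eigenvalues hn i)
      · exact mul_nonpos_of_nonpos_of_nonneg (le_of_lt (hneg _ hpi)) (sq_nonneg _)
      · rw [hvanish i hpi]; simp)
    ⟨j, Finset.mem_univ j, by
      dsimp only
      exact mul_neg_of_neg_of_pos (hneg _ hpj) (pow_two_pos_of_ne_zero hj)⟩
  simpa using this


/-- Quantitative bound on the span of eigenvectors with eigenvalues `≤ -c`. -/
lemma inner_le_of_mem_span {T : H →ₗ[ℝ] H} (hT : T.IsSymmetric)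
    {n : ℕ} (hn : Module.finrank ℝ H = n) (p : ℝ → Prop) {c : ℝ}
    (hc : ∀ i, p (hT.eigenvalues hn i) → hT.eigenvalues hn i ≤ -c)
    {x : H}
    (hx : x ∈ Submodule.span ℝ
      ↑((Finset.univ.filter fun i => p (hT.eigenvalues hn i)).image (hT.eigenvectorBasis hn))) :
    ⟪T x, x⟫ ≤ -c * ‖x‖^2 := by
  set b := hT.eigenvectorBasis hn
  rw [inner_map_self_eq_sum hT hn x, norm_sq_eq_sum b x, Finset.mul_sum]
  refine Finset.sum_le_sum fun i _ => ?_
  by_cases hpi : p (hT.eigenvalues hn i)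
  · exact mul_le_mul_of_nonneg_right (hc _ hpi) (sq_nonneg _)
  · rw [repr_eq_zero_of_mem_span b _ hx (by simp [hpi])]
    simp

lemma eigenvalues_ne_zero {T : H →L[ℝ] H} (hT : (↑T : H →ₗ[ℝ] H).IsSymmetric)
    (hinv : Function.Bijective ⇑T) {n : ℕ} (hn : Module.finrank ℝ H = n) (i : Fin n) :
    hT.eigenvalues hn i ≠ 0 := by
  intro h0
  have h1 := hT.apply_eigenvectorBasis hn i
  have h2 : T (hT.eigenvectorBasis hn i) = 0 := by
    rw [show T (hT.eigenvectorBasis hn i) = (↑T : H →ₗ[ℝ] H) (hT.eigenvectorBasis hn i) from rfl,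
      h1, h0]
    norm_num
  exact (hT.eigenvectorBasis hn).orthonormal.ne_zero i
    (hinv.injective (by rw [h2, map_zero]))

lemma finrank_span_filter_eq_card {T : H →ₗ[ℝ] H} (hT : T.IsSymmetric)
    {n : ℕ} (hn : Module.finrank ℝ H = n) (p : ℝ → Prop) :
    Module.finrank ℝ ↥(Submodule.span ℝ
      ((((Finset.univ.filter fun i => p (hT.eigenvalues hn i)).image
        (hT.eigenvectorBasis hn)) : Finset H) : Set H))
      = (Finset.univ.filter fun i => p (hT.eigenvalues hn i)).card := by
  set b := hT.eigenvectorBasis hn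
  have hinj : Function.Injective ⇑b := b.orthonormal.linearIndependent.injective
  rw [finrank_span_finset_eq_card
      (s := (Finset.univ.filter fun i => p (hT.eigenvalues hn i)).image b)
    ((b.orthonormal.linearIndependent.linearIndepOn_id).mono (by
      intro y hy
      obtain ⟨j, _, rfl⟩ := Finset.mem_image.1 (Finset.mem_coe.1 hy)
      exact Set.mem_range_self j)),
    Finset.card_image_of_injective _ hinj]

lemma morseIndex_eq_card {T : H →L[ℝ] H} (hT : (↑T : H →ₗ[ℝ] H).IsSymmetric)
    {n : ℕ} (hn : Module.finrank ℝ H = n) :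
    morseIndex T = (Finset.univ.filter fun i => hT.eigenvalues hn i < 0).card := by
  unfold morseIndex
  rw [iSup_eigenspace_eq_span hT hn (fun μ => μ < 0), finrank_span_filter_eq_card hT hn (fun μ => μ < 0)]

lemma posIndex_eq_card {T : H →L[ℝ] H} (hT : (↑T : H →ₗ[ℝ] H).IsSymmetric)
    {n : ℕ} (hn : Module.finrank ℝ H = n) :
    posIndex T = (Finset.univ.filter fun i => 0 < hT.eigenvalues hn i).card := by
  unfold posIndex
  rw [iSup_eigenspace_eq_span hT hn (fun μ => 0 < μ), finrank_span_filter_eq_card hT hn (fun μ => 0 < μ)]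

lemma morse_add_pos {T : H →L[ℝ] H} (hT : (↑T : H →ₗ[ℝ] H).IsSymmetric)
    (hinv : Function.Bijective ⇑T) :
    morseIndex T + posIndex T = Module.finrank ℝ H := by
  have hn : Module.finrank ℝ H = Module.finrank ℝ H := rfl
  rw [morseIndex_eq_card hT hn, posIndex_eq_card hT hn]
  have : (Finset.univ.filter fun i => 0 < hT.eigenvalues hn i)
      = (Finset.univ.filter fun i => ¬ (hT.eigenvalues hn i < 0)) := by
    refine Finset.filter_congr fun i _ => ?_
    have := eigenvalues_ne_zero hT hinv hn i
    constructor
    · intro h; exact not_lt.2 (le_of_lt h)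
    · intro h; exact lt_of_le_of_ne (not_lt.1 h) (Ne.symm this)
  rw [this, Finset.card_filter_add_card_filter_not, Finset.card_univ, Fintype.card_fin]

lemma inner_pos_of_mem_span {T : H →ₗ[ℝ] H} (hT : T.IsSymmetric)
    {n : ℕ} (hn : Module.finrank ℝ H = n) (p : ℝ → Prop)
    {x : H}
    (hx : x ∈ Submodule.span ℝ
      ↑((Finset.univ.filter fun i => p (hT.eigenvalues hn i)).image (hT.eigenvectorBasis hn)))
    (hx0 : x ≠ 0) (hpos : ∀ μ, p μ → 0 < μ) : 0 < ⟪T x, x⟫ := by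
  set b := hT.eigenvectorBasis hn
  rw [inner_map_self_eq_sum hT hn x]
  have hvanish : ∀ i, ¬ p (hT.eigenvalues hn i) → b.repr x i = 0 := fun i hi =>
    repr_eq_zero_of_mem_span b _ hx (by simp [hi])
  have hex : ∃ i, b.repr x i ≠ 0 := by
    by_contra h
    push_neg at h
    apply hx0
    have : b.repr x = 0 := by ext i; simpa using h i
    simpa using congrArg b.repr.symm this
  obtain ⟨j, hj⟩ := hex
  have hpj : p (hT.eigenvalues hn j) := by
    by_contra h; exact hj (hvanish j h)
  have := Finset.sum_lt_sum (s := Finset.univ)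
    (f := fun _ => (0:ℝ)) (g := fun i => hT.eigenvalues hn i * (b.repr x i)^2)
    (fun i _ => by
      dsimp only
      by_cases hpi : p (hT.eigenvalues hn i)
      · exact mul_nonneg (le_of_lt (hpos _ hpi)) (sq_nonneg _)
      · rw [hvanish i hpi]; simp)
    ⟨j, Finset.mem_univ j, by
      dsimp only
      exact mul_pos (hpos _ hpj) (pow_two_pos_of_ne_zero hj)⟩
  simpa using this

lemma inner_ge_of_mem_span {T : H →ₗ[ℝ] H} (hT : T.IsSymmetric)
    {n : ℕ} (hn : Module.finrank ℝ H = n) (p : ℝ → Prop) {c : ℝ}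
    (hc : ∀ i, p (hT.eigenvalues hn i) → c ≤ hT.eigenvalues hn i)
    {x : H}
    (hx : x ∈ Submodule.span ℝ
      ↑((Finset.univ.filter fun i => p (hT.eigenvalues hn i)).image (hT.eigenvectorBasis hn))) :
    c * ‖x‖^2 ≤ ⟪T x, x⟫ := by
  set b := hT.eigenvectorBasis hn
  rw [inner_map_self_eq_sum hT hn x, norm_sq_eq_sum b x, Finset.mul_sum]
  refine Finset.sum_le_sum fun i _ => ?_
  by_cases hpi : p (hT.eigenvalues hn i)
  · exact mul_le_mul_of_nonneg_right (hc _ hpi) (sq_nonneg _)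
  · rw [repr_eq_zero_of_mem_span b _ hx (by simp [hpi])]
    simp

lemma finrank_le_morseIndex {S : H →L[ℝ] H} (hS : (↑S : H →ₗ[ℝ] H).IsSymmetric)
    (hinv : Function.Bijective ⇑S) (W : Submodule ℝ H)
    (hW : ∀ x ∈ W, x ≠ 0 → ⟪S x, x⟫ < 0) :
    Module.finrank ℝ W ≤ morseIndex S := by
  have hn : Module.finrank ℝ H = Module.finrank ℝ H := rfl
  have hdisj : Disjoint W
      (⨆ μ : {μ : ℝ // 0 < μ}, Module.End.eigenspace (↑S : H →ₗ[ℝ] H) ↑μ) := by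
    rw [Submodule.disjoint_def]
    intro x hxW hxP
    by_contra hx0
    have hxP' : x ∈ Submodule.span ℝ
        ↑((Finset.univ.filter fun i => 0 < hS.eigenvalues hn i).image (hS.eigenvectorBasis hn)) := by
      rwa [iSup_eigenspace_eq_span hS hn (fun μ => 0 < μ)] at hxP
    have hpos := inner_pos_of_mem_span hS hn (fun μ => 0 < μ) hxP' hx0 (fun _ h => h)
    have hneg := hW x hxW hx0
    have : ((↑S : H →ₗ[ℝ] H) x : H) = S x := rfl
    rw [this] at hpos
    linarith
  have hle := Submodule.finrank_add_finrank_le_of_disjoint hdisj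
  have hsum := morse_add_pos hS hinv
  unfold posIndex at hsum
  omega

lemma finrank_le_posIndex {S : H →L[ℝ] H} (hS : (↑S : H →ₗ[ℝ] H).IsSymmetric)
    (hinv : Function.Bijective ⇑S) (W : Submodule ℝ H)
    (hW : ∀ x ∈ W, x ≠ 0 → 0 < ⟪S x, x⟫) :
    Module.finrank ℝ W ≤ posIndex S := by
  have hn : Module.finrank ℝ H = Module.finrank ℝ H := rfl
  have hdisj : Disjoint W
      (⨆ μ : {μ : ℝ // μ < 0}, Module.End.eigenspace (↑S : H →ₗ[ℝ] H) ↑μ) := by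
    rw [Submodule.disjoint_def]
    intro x hxW hxN
    by_contra hx0
    have hxN' : x ∈ Submodule.span ℝ
        ↑((Finset.univ.filter fun i => hS.eigenvalues hn i < 0).image (hS.eigenvectorBasis hn)) := by
      rwa [iSup_eigenspace_eq_span hS hn (fun μ => μ < 0)] at hxN
    have hneg := inner_sign_of_mem_span hS hn (fun μ => μ < 0) hxN' hx0 (fun _ h => h)
    have hpos := hW x hxW hx0
    have : ((↑S : H →ₗ[ℝ] H) x : H) = S x := rfl
    rw [this] at hneg
    linarith
  have hle := Submodule.finrank_add_finrank_le_of_disjoint hdisj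
  have hsum := morse_add_pos hS hinv
  unfold morseIndex at hsum
  omega

/-- Local constancy of the Morse index near an invertible self-adjoint operator. -/
lemma exists_eps (T : H →L[ℝ] H) (hT : IsSelfAdjoint T) (hTinv : Function.Bijective ⇑T) :
    ∃ ε > 0, ∀ S : H →L[ℝ] H, IsSelfAdjoint S → Function.Bijective ⇑S →
      ‖S - T‖ < ε → morseIndex S = morseIndex T := by
  have hsym : (↑T : H →ₗ[ℝ] H).IsSymmetric := hT.isSymmetric
  set n := Module.finrank ℝ H with hndef
  have hn : Module.finrank ℝ H = n := rfl
  rcases Nat.eq_zero_or_pos n with h0 | hpos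
  · refine ⟨1, one_pos, fun S _ _ _ => ?_⟩
    have hm : ∀ U : H →L[ℝ] H, morseIndex U = 0 := fun U => by
      have := Submodule.finrank_le
        (⨆ μ : {μ : ℝ // μ < 0}, Module.End.eigenspace (↑U : H →ₗ[ℝ] H) ↑μ)
      unfold morseIndex
      omega
    rw [hm S, hm T]
  · have hne : (Finset.univ : Finset (Fin n)).Nonempty := ⟨⟨0, hpos⟩, Finset.mem_univ _⟩
    set ε := Finset.univ.inf' hne (fun i => |hsym.eigenvalues hn i|) with hεdef
    have hεpos : 0 < ε := by
      rw [hεdef, Finset.lt_inf'_iff]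
      intro i _
      exact abs_pos.2 (eigenvalues_ne_zero hsym hTinv hn i)
    have hεle : ∀ i, ε ≤ |hsym.eigenvalues hn i| := fun i =>
      Finset.inf'_le _ (Finset.mem_univ i)
    refine ⟨ε, hεpos, fun S hS hSinv hd => ?_⟩
    have hSsym : (↑S : H →ₗ[ℝ] H).IsSymmetric := hS.isSymmetric
    -- inner product perturbation bound
    have hpert : ∀ x : H, |⟪S x, x⟫ - ⟪T x, x⟫| ≤ ‖S - T‖ * ‖x‖^2 := by
      intro x
      have h1 : ⟪S x, x⟫ - ⟪T x, x⟫ = ⟪(S - T) x, x⟫ := by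
        rw [ContinuousLinearMap.sub_apply, inner_sub_left]
      rw [h1]
      calc |⟪(S - T) x, x⟫| ≤ ‖(S - T) x‖ * ‖x‖ := abs_real_inner_le_norm _ _
        _ ≤ (‖S - T‖ * ‖x‖) * ‖x‖ :=
            mul_le_mul_of_nonneg_right ((S - T).le_opNorm x) (norm_nonneg x)
        _ = ‖S - T‖ * ‖x‖^2 := by ring
    -- S is negative on the negative space of T
    have hSneg : ∀ x ∈ (⨆ μ : {μ : ℝ // μ < 0},
        Module.End.eigenspace (↑T : H →ₗ[ℝ] H) ↑μ), x ≠ 0 → ⟪S x, x⟫ < 0 := by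
      intro x hx hx0
      have hx' : x ∈ Submodule.span ℝ
          ↑((Finset.univ.filter fun i => hsym.eigenvalues hn i < 0).image
            (hsym.eigenvectorBasis hn)) := by
        rwa [iSup_eigenspace_eq_span hsym hn (fun μ => μ < 0)] at hx
      have hq : ⟪(↑T : H →ₗ[ℝ] H) x, x⟫ ≤ -ε * ‖x‖^2 :=
        inner_le_of_mem_span hsym hn (fun μ => μ < 0)
          (fun i hi => by
            have h1 := hεle i
            rw [abs_of_neg hi] at h1
            linarith) hx'
      have hq' : ⟪T x, x⟫ ≤ -ε * ‖x‖^2 := hq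
      have hp := hpert x
      have hx2 : 0 < ‖x‖^2 := by
        have := norm_pos_iff.2 hx0
        positivity
      have habs := abs_le.1 hp
      nlinarith [habs.2]
    -- S is positive on the positive space of T
    have hSpos : ∀ x ∈ (⨆ μ : {μ : ℝ // 0 < μ},
        Module.End.eigenspace (↑T : H →ₗ[ℝ] H) ↑μ), x ≠ 0 → 0 < ⟪S x, x⟫ := by
      intro x hx hx0
      have hx' : x ∈ Submodule.span ℝ
          ↑((Finset.univ.filter fun i => 0 < hsym.eigenvalues hn i).image
            (hsym.eigenvectorBasis hn)) := by
        rwa [iSup_eigenspace_eq_span hsym hn (fun μ => 0 < μ)] at hx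
      have hq : ε * ‖x‖^2 ≤ ⟪(↑T : H →ₗ[ℝ] H) x, x⟫ :=
        inner_ge_of_mem_span hsym hn (fun μ => 0 < μ)
          (fun i hi => by
            have h1 := hεle i
            rw [abs_of_pos hi] at h1
            linarith) hx'
      have hq' : ε * ‖x‖^2 ≤ ⟪T x, x⟫ := hq
      have hp := hpert x
      have hx2 : 0 < ‖x‖^2 := by
        have := norm_pos_iff.2 hx0
        positivity
      have habs := abs_le.1 hp
      nlinarith [habs.1]
    -- conclude
    have h1 : morseIndex T ≤ morseIndex S :=
      finrank_le_morseIndex hSsym hSinv _ hSneg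
    have h2 : posIndex T ≤ posIndex S :=
      finrank_le_posIndex hSsym hSinv _ hSpos
    have h3 := morse_add_pos hsym hTinv
    have h4 := morse_add_pos hSsym hSinv
    omega

end MorseAux

end MorseAuxSection

/-- If invertible symmetric operators `A` and `B` on a finite-dimensional real
inner product space are connected by a continuous path of invertible symmetric operators, then
`μ₋(A) = μ₋(B)`. -/
theorem morse_index_homotopy_invariance
    {H : Type*} [NormedAddCommGroup H] [InnerProductSpace ℝ H] [FiniteDimensional ℝ H]
    (A B : H →L[ℝ] H) (hA : IsSelfAdjoint A) (hB : IsSelfAdjoint B)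
    (hAinv : Function.Bijective ⇑A) (hBinv : Function.Bijective ⇑B)
    (γ : ℝ → H →L[ℝ] H) (hγ : ContinuousOn γ (Icc 0 1))
    (h0 : γ 0 = A) (h1 : γ 1 = B)
    (hpath : ∀ t ∈ Icc (0:ℝ) 1, IsSelfAdjoint (γ t) ∧ Function.Bijective ⇑(γ t)) :
    morseIndex A = morseIndex B := by
  have key : ∀ t₀ ∈ Icc (0:ℝ) 1,
      ∀ᶠ t in nhdsWithin t₀ (Icc (0:ℝ) 1), morseIndex (γ t) = morseIndex (γ t₀) := by
    intro t₀ ht₀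
    obtain ⟨ε, hε, hloc⟩ := MorseAux.exists_eps (γ t₀) (hpath t₀ ht₀).1 (hpath t₀ ht₀).2
    have hcont : Filter.Tendsto γ (nhdsWithin t₀ (Icc (0:ℝ) 1)) (nhds (γ t₀)) := hγ t₀ ht₀
    have hsmall : ∀ᶠ t in nhdsWithin t₀ (Icc (0:ℝ) 1), ‖γ t - γ t₀‖ < ε := by
      have := Metric.tendsto_nhds.1 hcont ε hε
      filter_upwards [this] with t ht
      rwa [dist_eq_norm] at ht
    filter_upwards [hsmall, self_mem_nhdsWithin] with t hts htm
    exact hloc (γ t) (hpath t htm).1 (hpath t htm).2 hts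
  have hcontOn : ContinuousOn (fun t => morseIndex (γ t)) (Icc (0:ℝ) 1) := by
    intro t₀ ht₀
    exact tendsto_nhds_of_eventually_eq (key t₀ ht₀)
  have := isPreconnected_Icc.constant (α := ℝ) hcontOn
    (Set.left_mem_Icc.2 zero_le_one) (Set.right_mem_Icc.2 zero_le_one)
  rw [h0, h1] at this
  exact this
end
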